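/- For any positive integer w and positive real m with w ≤ m, Σ_{k=1}^{⌈log₂ w⌉} (w/2^k)·log₂(2^k·m/w) ≤ w·log₂(m/w) + 2w. -/

import Mathlib

lemma geom_icc_eq (n : ℕ) : ∑ k ∈ Finset.Icc 1 n, ((1:ℝ)/2)^k = 1 - (1/2)^n := by
  induction n with
  | zero => simp
  | succ n ih =>
    rw [Finset.sum_Icc_succ_top (Nat.succ_le_succ (Nat.zero_le n)), ih, pow_succ]
    ring

lemma kdiv_icc_eq (n : ℕ) :
    ∑ k ∈ Finset.Icc 1 n, (k:ℝ)/2^k = 2 - ((n:ℝ)+2)/2^n := by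
  induction n with
  | zero => simp
  | succ n ih =>
    rw [Finset.sum_Icc_succ_top (Nat.succ_le_succ (Nat.zero_le n)), ih]
    have h : (2:ℝ)^n ≠ 0 := by positivity
    push_cast
    field_simp
    ring

lemma geom_icc_le (n : ℕ) : ∑ k ∈ Finset.Icc 1 n, ((1:ℝ)/2)^k ≤ 1 := by
  rw [geom_icc_eq]
  have : (0:ℝ) < (1/2)^n := by positivity
  linarith

lemma kdiv_icc_le (n : ℕ) : ∑ k ∈ Finset.Icc 1 n, (k:ℝ)/2^k ≤ 2 := by
  rw [kdiv_icc_eq]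
  have h1 : (0:ℝ) < 2^n := by positivity
  have h2 : (0:ℝ) < ((n:ℝ)+2)/2^n := by positivity
  linarith

theorem bucket_sum_bound (w : ℕ) (hw : 1 ≤ w) (m : ℝ) (hm : (w : ℝ) ≤ m) :
    ∑ k ∈ Finset.Icc 1 ⌈Real.logb 2 (w : ℝ)⌉₊,
        ((w : ℝ) / 2 ^ k) * Real.logb 2 (2 ^ k * m / w) ≤
      (w : ℝ) * Real.logb 2 (m / w) + 2 * w := by
  have hw1 : (1:ℝ) ≤ (w:ℝ) := by exact_mod_cast hw
  have hwpos : (0:ℝ) < (w:ℝ) := by linarith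
  have hmw : (1:ℝ) ≤ m / w := (one_le_div hwpos).2 hm
  have hL : 0 ≤ Real.logb 2 (m / w) := Real.logb_nonneg one_lt_two hmw
  set K := ⌈Real.logb 2 (w:ℝ)⌉₊ with hK
  have hterm : ∀ k ∈ Finset.Icc 1 K,
      ((w : ℝ) / 2 ^ k) * Real.logb 2 (2 ^ k * m / w)
        = (w:ℝ) * Real.logb 2 (m/w) * ((1:ℝ)/2)^k + (w:ℝ) * ((k:ℝ)/2^k) := by
    intro k _
    have h2k : ((2:ℝ)^k) ≠ 0 := by positivity
    have hmw0 : m / (w:ℝ) ≠ 0 := by positivity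
    have : (2:ℝ)^k * m / w = 2^k * (m/w) := by ring
    rw [this, Real.logb_mul h2k hmw0]
    have hlog : Real.logb 2 ((2:ℝ)^k) = k := by
      simp [Real.logb_pow, Real.logb_self_eq_one]
    rw [hlog]
    field_simp
    have h12 : (2:ℝ)^k * ((1:ℝ)/2)^k = 1 := by rw [← mul_pow]; norm_num
    linear_combination (-(Real.logb 2 (m/w))) * h12
  rw [Finset.sum_congr rfl hterm, Finset.sum_add_distrib, ← Finset.mul_sum, ← Finset.mul_sum]
  have h1 : (w:ℝ) * Real.logb 2 (m/w) * (∑ k ∈ Finset.Icc 1 K, ((1:ℝ)/2)^k)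
      ≤ (w:ℝ) * Real.logb 2 (m/w) * 1 :=
    mul_le_mul_of_nonneg_left (geom_icc_le K) (by positivity)
  have h2 : (w:ℝ) * (∑ k ∈ Finset.Icc 1 K, ((k:ℝ)/2^k)) ≤ (w:ℝ) * 2 :=
    mul_le_mul_of_nonneg_left (kdiv_icc_le K) (le_of_lt hwpos)
  linarith
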